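/- If each A^k is a row-stochastic matrix whose positive entries are at least α > 0, and the associated thresholded graph sequence satisfies block strong connectivity with self-loops (Assumption: union of each block [μ_j, μ_{j+1}−1] strongly connected, self-loop at every node), then the product A^{μ_{l+n}−1} ⋯ A^{μ_l} over n consecutive blocks is entrywise positive with every entry at least α^{μ_{l+n} − μ_l}. -/
import Mathlib

/-- The ordered product `A^(b-1) * A^(b-2) * ⋯ * A^a` of a sequence of matrices. -/
def matProd {n : ℕ} (A : ℕ → Matrix (Fin n) (Fin n) ℝ) (a b : ℕ) :
    Matrix (Fin n) (Fin n) ℝ :=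
  ((List.range (b - a)).map (fun t => A (b - 1 - t))).prod

lemma matProd_same {n : ℕ} (A : ℕ → Matrix (Fin n) (Fin n) ℝ) (a : ℕ) :
    matProd A a a = 1 := by simp [matProd]

lemma matProd_succ {n : ℕ} (A : ℕ → Matrix (Fin n) (Fin n) ℝ) {a b : ℕ} (h : a ≤ b) :
    matProd A a (b + 1) = A b * matProd A a b := by
  unfold matProd
  have h1 : b + 1 - a = (b - a) + 1 := by omega
  rw [h1, List.range_succ_eq_map, List.map_cons, List.prod_cons, List.map_map]
  have e0 : b + 1 - 1 - 0 = b := by omega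
  rw [e0]
  have e1 : (fun t => A (b + 1 - 1 - t)) ∘ Nat.succ = fun t => A (b - 1 - t) := by
    funext t
    simp only [Function.comp]
    have : b + 1 - 1 - Nat.succ t = b - 1 - t := by omega
    rw [this]
  rw [e1]

lemma entry_le_mul {n : ℕ} {M N : Matrix (Fin n) (Fin n) ℝ}
    (hM : ∀ i j, 0 ≤ M i j) (hN : ∀ i j, 0 ≤ N i j) (i k j : Fin n) :
    M i k * N k j ≤ (M * N) i j := by
  rw [Matrix.mul_apply]
  exact Finset.single_le_sum (f := fun x => M i x * N x j)
    (fun x _ => mul_nonneg (hM i x) (hN x j)) (Finset.mem_univ k)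

lemma matProd_nonneg {n : ℕ} {A : ℕ → Matrix (Fin n) (Fin n) ℝ}
    (hApos : ∀ k i j, 0 ≤ A k i j) {a : ℕ} :
    ∀ b, a ≤ b → ∀ i j, 0 ≤ matProd A a b i j := by
  refine Nat.le_induction ?_ ?_
  · intro i j
    rw [matProd_same]
    by_cases h : i = j <;> simp [Matrix.one_apply, h]
  · intro b hab ih i j
    rw [matProd_succ A hab, Matrix.mul_apply]
    exact Finset.sum_nonneg fun x _ => mul_nonneg (hApos b i x) (ih x j)

lemma matProd_diag {n : ℕ} {A : ℕ → Matrix (Fin n) (Fin n) ℝ} {α : ℝ}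
    (hα0 : 0 < α) (hself : ∀ k i, α ≤ A k i i) (hApos : ∀ k i j, 0 ≤ A k i j) {a : ℕ} :
    ∀ b, a ≤ b → ∀ v : Fin n, α ^ (b - a) ≤ matProd A a b v v := by
  refine Nat.le_induction ?_ ?_
  · intro v
    rw [matProd_same]
    simp [Matrix.one_apply]
  · intro b hab ih v
    rw [matProd_succ A hab]
    have e : b + 1 - a = (b - a) + 1 := by omega
    calc α ^ (b + 1 - a) = α * α ^ (b - a) := by rw [e, pow_succ]; ring
      _ ≤ A b v v * matProd A a b v v :=
        mul_le_mul (hself b v) (ih v) (pow_pos hα0 _).le (hα0.le.trans (hself b v))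
      _ ≤ (A b * matProd A a b) v v :=
        entry_le_mul (hApos b) (matProd_nonneg hApos b hab) v v v

lemma matProd_edge {n : ℕ} {A : ℕ → Matrix (Fin n) (Fin n) ℝ} {α : ℝ}
    (hα0 : 0 < α) (hself : ∀ k i, α ≤ A k i i) (hApos : ∀ k i j, 0 ≤ A k i j)
    {a t : ℕ} {v w : Fin n} (hat : a ≤ t) (hA : α ≤ A t w v) :
    ∀ c, t + 1 ≤ c → α ^ (c - a) ≤ matProd A a c w v := by
  refine Nat.le_induction ?_ ?_
  · rw [matProd_succ A hat]
    have e : t + 1 - a = (t - a) + 1 := by omega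
    calc α ^ (t + 1 - a) = α * α ^ (t - a) := by rw [e, pow_succ]; ring
      _ ≤ A t w v * matProd A a t v v :=
        mul_le_mul hA (matProd_diag hα0 hself hApos t hat v) (pow_pos hα0 _).le
          (hα0.le.trans hA)
      _ ≤ (A t * matProd A a t) w v :=
        entry_le_mul (hApos t) (matProd_nonneg hApos t hat) w v v
  · intro c hc ih
    have hac : a ≤ c := by omega
    rw [matProd_succ A hac]
    have e : c + 1 - a = (c - a) + 1 := by omega
    calc α ^ (c + 1 - a) = α * α ^ (c - a) := by rw [e, pow_succ]; ring
      _ ≤ A c w w * matProd A a c w v :=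
        mul_le_mul (hself c w) ih (pow_pos hα0 _).le (hα0.le.trans (hself c w))
      _ ≤ (A c * matProd A a c) w v :=
        entry_le_mul (hApos c) (matProd_nonneg hApos c hac) w w v

lemma matProd_split {n : ℕ} (A : ℕ → Matrix (Fin n) (Fin n) ℝ) {a b : ℕ} (hab : a ≤ b) :
    ∀ c, b ≤ c → matProd A a c = matProd A b c * matProd A a b := by
  refine Nat.le_induction ?_ ?_
  · rw [matProd_same, one_mul]
  · intro c hbc ih
    have hac : a ≤ c := hab.trans hbc
    rw [matProd_succ A hac, matProd_succ A hbc, ih, Matrix.mul_assoc]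

lemma crossing {V : Type*} {r : V → V → Prop} {S : Finset V} [DecidableEq V]
    {i j : V} (h : Relation.ReflTransGen r i j) (hi : i ∈ S) (hj : j ∉ S) :
    ∃ v w, v ∈ S ∧ w ∉ S ∧ r v w := by
  induction h with
  | refl => exact absurd hi hj
  | @tail c d hic hcd ih =>
    by_cases hc : c ∈ S
    · exact ⟨c, d, hc, hj, hcd⟩
    · exact ih hc

/-- For row-stochastic matrices whose positive entries are at least `α` and whose
thresholded graphs satisfy block strong connectivity with self-loops, the product
over `n` consecutive blocks is entrywise at least `α^(μ (l+n) - μ l)`. -/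
theorem stmt17 {n : ℕ} (hn : 0 < n) (α : ℝ) (hα0 : 0 < α) (hα1 : α < 1)
    (A : ℕ → Matrix (Fin n) (Fin n) ℝ)
    (hApos : ∀ k i j, 0 ≤ A k i j) (hArow : ∀ k i, ∑ j, A k i j = 1)
    (hAα : ∀ k i j, 0 < A k i j → α ≤ A k i j)
    (hself : ∀ k i, α ≤ A k i i)
    (b : ℕ → ℕ) (hb : ∀ k, 0 < b k)
    (μ : ℕ → ℕ) (hμ0 : μ 0 = 0) (hμ : ∀ k, μ (k + 1) = μ k + b (k + 1))
    (hconn : ∀ k, ∀ i j : Fin n,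
      Relation.ReflTransGen (fun a c => ∃ t, μ k ≤ t ∧ t < μ (k + 1) ∧ α ≤ A t c a) i j) :
    ∀ l : ℕ, ∀ i j : Fin n,
      α ^ (μ (l + n) - μ l) ≤ matProd A (μ l) (μ (l + n)) i j := by
  have hμmono : ∀ k m : ℕ, μ k ≤ μ (k + m) := by
    intro k m
    induction m with
    | zero => exact le_refl _
    | succ m ih =>
      have h2 : k + (m + 1) = (k + m) + 1 := by omega
      rw [h2, hμ (k + m)]
      omega
  intro l i j
  -- key inductive claim
  have key : ∀ m : ℕ, ∃ S : Finset (Fin n), min n (m + 1) ≤ S.card ∧ j ∈ S ∧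
      ∀ j' ∈ S, α ^ (μ (l + m) - μ l) ≤ matProd A (μ l) (μ (l + m)) j' j := by
    intro m
    induction m with
    | zero =>
      refine ⟨{j}, ?_, Finset.mem_singleton_self j, ?_⟩
      · simp only [Finset.card_singleton]
        omega
      · intro j' hj'
        rw [Finset.mem_singleton] at hj'
        subst hj'
        simp only [Nat.add_zero, Nat.sub_self, pow_zero, matProd_same]
        simp [Matrix.one_apply]
    | succ m ih =>
      obtain ⟨S, hcard, hjS, hS⟩ := ih
      set k := l + m with hk
      have hlk : μ l ≤ μ k := hμmono l m
      have hkk1 : μ k ≤ μ (k + 1) := by have := hμ k; omega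
      have hsplit : matProd A (μ l) (μ (k + 1)) =
          matProd A (μ k) (μ (k + 1)) * matProd A (μ l) (μ k) :=
        matProd_split A hlk (μ (k + 1)) hkk1
      have hexp : μ (k + 1) - μ l = (μ (k + 1) - μ k) + (μ k - μ l) := by omega
      have hBnn := matProd_nonneg hApos (μ (k + 1)) hkk1
      have hPnn := matProd_nonneg hApos (μ k) hlk
      -- entries bound for old members
      have hold : ∀ j' ∈ S, α ^ (μ (k + 1) - μ l) ≤ matProd A (μ l) (μ (k + 1)) j' j := by
        intro j' hj'
        rw [hsplit, hexp, pow_add]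
        calc α ^ (μ (k + 1) - μ k) * α ^ (μ k - μ l)
            ≤ matProd A (μ k) (μ (k + 1)) j' j' * matProd A (μ l) (μ k) j' j :=
              mul_le_mul (matProd_diag hα0 hself hApos (μ (k + 1)) hkk1 j')
                (hS j' hj') (pow_pos hα0 _).le
                ((matProd_nonneg hApos (μ (k + 1)) hkk1 j' j'))
          _ ≤ _ := entry_le_mul hBnn hPnn j' j' j
      by_cases hful : ∀ x : Fin n, x ∈ S
      · refine ⟨S, ?_, hjS, ?_⟩
        · have : S = Finset.univ := Finset.eq_univ_iff_forall.mpr hful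
          rw [this, Finset.card_univ, Fintype.card_fin]
          omega
        · intro j' hj'
          have : l + (m + 1) = k + 1 := by omega
          rw [this]
          exact hold j' hj'
      · push_neg at hful
        obtain ⟨j₀, hj₀⟩ := hful
        obtain ⟨v, w, hvS, hwS, t, ht1, ht2, htA⟩ := crossing (hconn k j j₀) hjS hj₀
        refine ⟨insert w S, ?_, Finset.mem_insert_of_mem hjS, ?_⟩
        · rw [Finset.card_insert_of_notMem hwS]
          have hle : S.card ≤ n := by
            have := Finset.card_le_card (Finset.subset_univ S)
            rwa [Finset.card_univ, Fintype.card_fin] at this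
          have hlt : S.card < n := by
            rcases lt_or_eq_of_le hle with h | h
            · exact h
            · exfalso
              apply hwS
              have : S = Finset.univ := Finset.eq_univ_of_card S (by rw [Fintype.card_fin]; exact h)
              rw [this]; exact Finset.mem_univ w
          omega
        · intro j' hj'
          have hke : l + (m + 1) = k + 1 := by omega
          rw [hke]
          rcases Finset.mem_insert.mp hj' with h | h
          · subst h
            rw [hsplit, hexp, pow_add]
            calc α ^ (μ (k + 1) - μ k) * α ^ (μ k - μ l)
                ≤ matProd A (μ k) (μ (k + 1)) j' v * matProd A (μ l) (μ k) v j :=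
                  mul_le_mul
                    (matProd_edge hα0 hself hApos ht1 htA (μ (k + 1)) (by omega))
                    (hS v hvS) (pow_pos hα0 _).le (hBnn j' v)
              _ ≤ _ := entry_le_mul hBnn hPnn j' v j
          · exact hold j' h
  obtain ⟨S, hcard, hjS, hS⟩ := key n
  have hSuniv : S = Finset.univ := by
    apply Finset.eq_univ_of_card
    rw [Fintype.card_fin]
    have hle : S.card ≤ n := by
      have := Finset.card_le_card (Finset.subset_univ S)
      rwa [Finset.card_univ, Fintype.card_fin] at this
    omega
  exact hS i (hSuniv ▸ Finset.mem_univ i)
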